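/- For the learning rates α_t = (H+1)/(H+t) with H ≥ 1 and weights α_t^i = α_i ∏_{j=i+1}^t (1-α_j), for every fixed i ≥ 1, the series ∑_{t=i}^∞ α_t^i converges and equals 1 + 1/H. -/

import Mathlib

theorem stmt2 (H : ℕ) (hH : 1 ≤ H)
    (α : ℕ → ℝ) (hα : ∀ t : ℕ, α t = (H + 1) / (H + t))
    (w : ℕ → ℕ → ℝ)
    (hw : ∀ t i : ℕ, w t i = α i * ∏ j ∈ Finset.Icc (i + 1) t, (1 - α j)) :
    ∀ i : ℕ, 1 ≤ i → HasSum (fun n : ℕ => w (i + n) i) (1 + 1 / (H : ℝ)) := by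
  intro i hi
  have hH0 : (0:ℝ) < H := by exact_mod_cast Nat.lt_of_lt_of_le Nat.zero_lt_one hH
  have hH1 : (1:ℝ) ≤ H := by exact_mod_cast hH
  have hi0 : (0:ℝ) < i := by exact_mod_cast Nat.lt_of_lt_of_le Nat.zero_lt_one hi
  have hHi : (0:ℝ) < (H:ℝ) + i := by linarith
  have hfac : ∀ j : ℕ, 1 ≤ j → 1 - α j = ((j:ℝ) - 1) / ((H:ℝ) + j) := by
    intro j hj
    have hj0 : (0:ℝ) < (H:ℝ) + j := by positivity
    rw [hα]
    field_simp
    ring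
  -- product nonneg
  have hP : ∀ N : ℕ, 0 ≤ ∏ j ∈ Finset.Icc (i + 1) (i + N), (1 - α j) := by
    intro N
    apply Finset.prod_nonneg
    intro j hj
    rw [Finset.mem_Icc] at hj
    have hj1 : 1 ≤ j := by omega
    rw [hfac j hj1]
    have : (1:ℝ) ≤ (j:ℝ) := by exact_mod_cast hj1
    have hj0 : (0:ℝ) < (H:ℝ) + j := by positivity
    apply div_nonneg <;> linarith
  set Q : ℕ → ℝ := fun n =>
    ((H:ℝ) + 1) * ((H:ℝ) + i + n) / ((H:ℝ) * ((H:ℝ) + i)) *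
      ∏ j ∈ Finset.Icc (i + 1) (i + n), (1 - α j) with hQ
  have hQrec : ∀ N : ℕ, Q (N + 1) = Q N * (((i:ℝ) + N) / ((H:ℝ) + i + N)) := by
    intro N
    have h1 : i + (N + 1) = (i + N) + 1 := by ring
    have h2 : i + 1 ≤ i + N + 1 := by omega
    have hden : (0:ℝ) < (H:ℝ) + i + N := by positivity
    have hden2 : (0:ℝ) < (H:ℝ) + (i + N + 1 : ℕ) := by positivity
    simp only [hQ, h1, Finset.prod_Icc_succ_top h2, hfac (i + N + 1) (by omega)]
    push_cast
    field_simp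
    ring
  have hQnonneg : ∀ N : ℕ, 0 ≤ Q N := by
    intro N
    have := hP N
    have h1 : (0:ℝ) ≤ ((H:ℝ) + 1) * ((H:ℝ) + i + N) / ((H:ℝ) * ((H:ℝ) + i)) := by positivity
    exact mul_nonneg h1 this
  have hQ0 : Q 0 = 1 + 1 / (H:ℝ) := by
    simp only [hQ]
    rw [show i + 0 = i from rfl, Finset.Icc_eq_empty (by omega), Finset.prod_empty]
    push_cast
    field_simp
    ring
  have hstep : ∀ N : ℕ, w (i + N) i = Q N - Q (N + 1) := by
    intro N
    rw [hQrec N]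
    have hden : (0:ℝ) < (H:ℝ) + i + N := by positivity
    have : Q N - Q N * (((i:ℝ) + N) / ((H:ℝ) + i + N))
        = Q N * ((H:ℝ) / ((H:ℝ) + i + N)) := by
      field_simp
      ring
    rw [this, hw, hα]
    simp only [hQ]
    push_cast
    field_simp
  have hsum : ∀ N : ℕ, ∑ n ∈ Finset.range N, w (i + n) i = Q 0 - Q N := by
    intro N
    induction N with
    | zero => simp
    | succ N ih => rw [Finset.sum_range_succ, ih, hstep]; ring
  have hbound : ∀ N : ℕ, ((i:ℝ) + N) * Q N ≤ (i:ℝ) * Q 0 := by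
    intro N
    induction N with
    | zero => simp
    | succ N ih =>
      have hden : (0:ℝ) < (H:ℝ) + i + N := by positivity
      rw [hQrec N]
      push_cast
      have key : ((i:ℝ) + (N + 1)) * (Q N * (((i:ℝ) + N) / ((H:ℝ) + i + N)))
          ≤ ((i:ℝ) + N) * Q N := by
        rw [mul_comm (Q N), ← mul_assoc, mul_comm _ (Q N)]
        have h1 : ((i:ℝ) + (N + 1)) * (((i:ℝ) + N) / ((H:ℝ) + i + N)) ≤ (i:ℝ) + N := by
          rw [mul_comm, div_mul_eq_mul_div, div_le_iff₀ hden]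
          nlinarith [hi0]
        calc Q N * (((i:ℝ) + (N + 1)) * (((i:ℝ) + N) / ((H:ℝ) + i + N)))
            ≤ Q N * ((i:ℝ) + N) := by
              apply mul_le_mul_of_nonneg_left _ (hQnonneg N)
              convert h1 using 2
          _ = ((i:ℝ) + N) * Q N := by ring
      calc ((i:ℝ) + (N + 1)) * (Q N * (((i:ℝ) + N) / ((H:ℝ) + i + N)))
          ≤ ((i:ℝ) + N) * Q N := key
        _ ≤ (i:ℝ) * Q 0 := ih
  have hQtend : Filter.Tendsto Q Filter.atTop (nhds 0) := by
    have htend : Filter.Tendsto (fun N : ℕ => (i:ℝ) * Q 0 / ((i:ℝ) + N))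
        Filter.atTop (nhds 0) := by
      apply Filter.Tendsto.div_atTop tendsto_const_nhds
      apply Filter.tendsto_atTop_add_const_left
      exact tendsto_natCast_atTop_atTop
    apply squeeze_zero hQnonneg _ htend
    intro N
    have hden : (0:ℝ) < (i:ℝ) + N := by positivity
    rw [le_div_iff₀ hden]
    calc Q N * ((i:ℝ) + N) = ((i:ℝ) + N) * Q N := by ring
      _ ≤ (i:ℝ) * Q 0 := hbound N
  have hnonneg : ∀ n : ℕ, 0 ≤ w (i + n) i := by
    intro n
    rw [hstep n, hQrec n]
    have hden : (0:ℝ) < (H:ℝ) + i + n := by positivity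
    have : Q n - Q n * (((i:ℝ) + n) / ((H:ℝ) + i + n)) = Q n * ((H:ℝ) / ((H:ℝ) + i + n)) := by
      field_simp; ring
    rw [this]
    have : (0:ℝ) ≤ (H:ℝ) / ((H:ℝ) + i + n) := by positivity
    exact mul_nonneg (hQnonneg n) this
  rw [hasSum_iff_tendsto_nat_of_nonneg hnonneg]
  have : Filter.Tendsto (fun N : ℕ => Q 0 - Q N) Filter.atTop (nhds (Q 0 - 0)) :=
    Filter.Tendsto.const_sub _ hQtend
  simp only [sub_zero, hQ0] at this
  simp only [hQ0] at hsum
  exact Filter.Tendsto.congr (fun N => (hsum N).symm) this
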